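/- Stochastic invariance of the Lyapunov sublevel set: if A_cl Q A_clᵀ + F̃ F̃ᵀ ⪯ Q for a positive semidefinite Q, and a square-integrable random vector E(t) satisfies E[E(t) E(t)ᵀ] ⪯ Q, then E(t+1) = A_cl E(t) + F̃ W(t), with W(t) zero-mean, unit-covariance, and independent of E(t), satisfies E[E(t+1) E(t+1)ᵀ] ⪯ Q. -/

import Mathlib

open Matrix MeasureTheory ProbabilityTheory

/-- Loewner order: `A ⪯ B` iff `B - A` is positive semidefinite. -/
def LoewnerLE {N : ℕ} (A B : Matrix (Fin N) (Fin N) ℝ) : Prop := (B - A).PosSemidef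

/-- Product of two L² real functions is integrable (Cauchy–Schwarz / Hölder). -/
lemma l2_mul_integrable {Ω : Type*} [MeasurableSpace Ω] {μ : Measure Ω} {f g : Ω → ℝ}
    (hf : MemLp f 2 μ) (hg : MemLp g 2 μ) : Integrable (fun ω => f ω * g ω) μ := by
  have h : MemLp (g • f) 1 μ := hf.smul (r := 1) hg
  have h' := memLp_one_iff_integrable.mp h
  have : (g • f) = fun ω => f ω * g ω := by
    funext ω; simp [mul_comm]
  rwa [this] at h'

/-- Integral of a product of two finite linear combinations. -/
lemma integral_sum_mul_sum {Ω : Type*} [MeasurableSpace Ω] {μ : Measure Ω}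
    {ι κ : Type*} [Fintype ι] [Fintype κ] (a : ι → ℝ) (b : κ → ℝ)
    (u : ι → Ω → ℝ) (v : κ → Ω → ℝ)
    (hint : ∀ k l, Integrable (fun ω => u k ω * v l ω) μ) :
    ∫ ω, (∑ k, a k * u k ω) * (∑ l, b l * v l ω) ∂μ
      = ∑ k, ∑ l, a k * b l * ∫ ω, u k ω * v l ω ∂μ := by
  have : (fun ω => (∑ k, a k * u k ω) * (∑ l, b l * v l ω))
      = fun ω => ∑ k, ∑ l, a k * b l * (u k ω * v l ω) := by
    funext ω
    rw [Finset.sum_mul_sum]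
    exact Finset.sum_congr rfl fun k _ => Finset.sum_congr rfl fun l _ =>
      mul_mul_mul_comm _ _ _ _
  rw [this,
    integral_finset_sum _ (fun k _ => integrable_finset_sum _
      (fun l _ => (hint k l).const_mul _))]
  refine Finset.sum_congr rfl fun k _ => ?_
  rw [integral_finset_sum _ (fun l _ => (hint k l).const_mul _)]
  exact Finset.sum_congr rfl fun l _ => integral_const_mul _ _

theorem stochastic_invariance (N d : ℕ)
    {Ω : Type*} [MeasurableSpace Ω] (μ : Measure Ω) [IsProbabilityMeasure μ]
    (Acl : Matrix (Fin N) (Fin N) ℝ) (Ft : Matrix (Fin N) (Fin d) ℝ)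
    (Q : Matrix (Fin N) (Fin N) ℝ) (hQ : Q.PosSemidef)
    (hLyap : LoewnerLE (Acl * Q * Aclᵀ + Ft * Ftᵀ) Q)
    (E : Ω → (Fin N → ℝ)) (W : Ω → (Fin d → ℝ))
    (hEmeas : Measurable E) (hWmeas : Measurable W)
    (hE2 : ∀ i, MemLp (fun ω => E ω i) 2 μ)
    (hW2 : ∀ i, MemLp (fun ω => W ω i) 2 μ)
    (hindep : IndepFun E W μ)
    (hWmean : ∀ i, (∫ ω, W ω i ∂μ) = 0)
    (hWcov : ∀ i j, (∫ ω, W ω i * W ω j ∂μ) = (1 : Matrix (Fin d) (Fin d) ℝ) i j)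
    (hEmom : LoewnerLE (Matrix.of fun i j => ∫ ω, E ω i * E ω j ∂μ) Q)
    (E' : Ω → (Fin N → ℝ)) (hE' : ∀ ω, E' ω = Acl.mulVec (E ω) + Ft.mulVec (W ω)) :
    LoewnerLE (Matrix.of fun i j => ∫ ω, E' ω i * E' ω j ∂μ) Q := by
  classical
  set M : Matrix (Fin N) (Fin N) ℝ := Matrix.of fun i j => ∫ ω, E ω i * E ω j ∂μ with hM
  -- the linear-combination parts
  set F : Fin N → Ω → ℝ := fun i ω => ∑ k, Acl i k * E ω k with hFdef
  set G : Fin N → Ω → ℝ := fun i ω => ∑ l, Ft i l * W ω l with hGdef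
  have hF2 : ∀ i, MemLp (F i) 2 μ := by
    intro i
    have h := memLp_finset_sum' (μ := μ) Finset.univ
      (f := fun k ω => Acl i k * E ω k) (fun k _ => (hE2 k).const_mul _)
    have he : (∑ k : Fin N, fun ω => Acl i k * E ω k) = F i := by
      funext ω; simp [hFdef]
    rwa [he] at h
  have hG2 : ∀ i, MemLp (G i) 2 μ := by
    intro i
    have h := memLp_finset_sum' (μ := μ) Finset.univ
      (f := fun l ω => Ft i l * W ω l) (fun l _ => (hW2 l).const_mul _)
    have he : (∑ l : Fin d, fun ω => Ft i l * W ω l) = G i := by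
      funext ω; simp [hGdef]
    rwa [he] at h
  -- integrability of all entrywise products
  have hIEE : ∀ k l, Integrable (fun ω => E ω k * E ω l) μ :=
    fun k l => l2_mul_integrable (hE2 k) (hE2 l)
  have hIEW : ∀ k l, Integrable (fun ω => E ω k * W ω l) μ :=
    fun k l => l2_mul_integrable (hE2 k) (hW2 l)
  have hIWE : ∀ k l, Integrable (fun ω => W ω k * E ω l) μ :=
    fun k l => l2_mul_integrable (hW2 k) (hE2 l)
  have hIWW : ∀ k l, Integrable (fun ω => W ω k * W ω l) μ :=
    fun k l => l2_mul_integrable (hW2 k) (hW2 l)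
  -- cross moments vanish by independence
  have hEW0 : ∀ k l, (∫ ω, E ω k * W ω l ∂μ) = 0 := by
    intro k l
    have hi : IndepFun (fun ω => E ω k) (fun ω => W ω l) μ :=
      hindep.comp (measurable_pi_apply k) (measurable_pi_apply l)
    have h2 := hi.integral_fun_mul_eq_mul_integral (hE2 k).aestronglyMeasurable
      (hW2 l).aestronglyMeasurable
    rw [hWmean l, mul_zero] at h2
    exact h2
  have hWE0 : ∀ k l, (∫ ω, W ω k * E ω l ∂μ) = 0 := by
    intro k l
    have : (fun ω => W ω k * E ω l) = fun ω => E ω l * W ω k := by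
      funext ω; ring
    rw [this, hEW0 l k]
  -- the four pieces of the second-moment recursion
  have hFF : ∀ i j, (∫ ω, F i ω * F j ω ∂μ) = (Acl * M * Aclᵀ) i j := by
    intro i j
    rw [hFdef]
    simp only
    rw [integral_sum_mul_sum _ _ _ _ hIEE]
    simp only [Matrix.mul_apply, Matrix.transpose_apply, hM, Matrix.of_apply]
    rw [Finset.sum_comm]
    refine Finset.sum_congr rfl fun l _ => ?_
    rw [Finset.sum_mul]
    refine Finset.sum_congr rfl fun k _ => ?_
    ring
  have hGG : ∀ i j, (∫ ω, G i ω * G j ω ∂μ) = (Ft * Ftᵀ) i j := by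
    intro i j
    rw [hGdef]
    simp only
    rw [integral_sum_mul_sum _ _ _ _ hIWW]
    simp only [Matrix.mul_apply, Matrix.transpose_apply]
    rw [Finset.sum_comm]
    refine Finset.sum_congr rfl fun l _ => ?_
    rw [Finset.sum_eq_single l]
    · rw [hWcov l l]; simp
    · intro k _ hkl
      rw [hWcov k l, Matrix.one_apply_ne hkl, mul_zero]
    · intro h; exact absurd (Finset.mem_univ l) h
  have hFG : ∀ i j, (∫ ω, F i ω * G j ω ∂μ) = 0 := by
    intro i j
    rw [hFdef, hGdef]
    simp only
    rw [integral_sum_mul_sum _ _ _ _ hIEW]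
    refine Finset.sum_eq_zero fun k _ => Finset.sum_eq_zero fun l _ => ?_
    rw [hEW0 k l, mul_zero]
  have hGF : ∀ i j, (∫ ω, G i ω * F j ω ∂μ) = 0 := by
    intro i j
    rw [hFdef, hGdef]
    simp only
    rw [integral_sum_mul_sum _ _ _ _ hIWE]
    refine Finset.sum_eq_zero fun k _ => Finset.sum_eq_zero fun l _ => ?_
    rw [hWE0 k l, mul_zero]
  -- entries of E' split as F + G
  have hE'entry : ∀ ω i, E' ω i = F i ω + G i ω := by
    intro ω i
    rw [hE' ω]
    simp [Matrix.mulVec, dotProduct, hFdef, hGdef]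
  -- second moment of E'
  have hkey : (Matrix.of fun i j => ∫ ω, E' ω i * E' ω j ∂μ)
      = Acl * M * Aclᵀ + Ft * Ftᵀ := by
    ext i j
    simp only [Matrix.of_apply, Matrix.add_apply]
    have : (fun ω => E' ω i * E' ω j)
        = fun ω => F i ω * F j ω + F i ω * G j ω + (G i ω * F j ω + G i ω * G j ω) := by
      funext ω; rw [hE'entry ω i, hE'entry ω j]; ring
    have i1 := l2_mul_integrable (hF2 i) (hF2 j)
    have i2 := l2_mul_integrable (hF2 i) (hG2 j)
    have i3 := l2_mul_integrable (hG2 i) (hF2 j)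
    have i4 := l2_mul_integrable (hG2 i) (hG2 j)
    have i12 : Integrable (fun ω => F i ω * F j ω + F i ω * G j ω) μ := i1.add i2
    have i34 : Integrable (fun ω => G i ω * F j ω + G i ω * G j ω) μ := i3.add i4
    rw [this, integral_add i12 i34, integral_add i1 i2,
      integral_add i3 i4, hFF, hGG, hFG, hGF]
    ring
  -- conclude via the Lyapunov inequality and congruence monotonicity
  rw [LoewnerLE, hkey]
  have hcong : (Acl * (Q - M) * Aclᵀ).PosSemidef := by
    have h := (hEmom : (Q - M).PosSemidef).mul_mul_conjTranspose_same Acl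
    rwa [Matrix.conjTranspose_eq_transpose_of_trivial] at h
  have hsum := (hLyap : (Q - (Acl * Q * Aclᵀ + Ft * Ftᵀ)).PosSemidef).add hcong
  have heq : Q - (Acl * Q * Aclᵀ + Ft * Ftᵀ) + Acl * (Q - M) * Aclᵀ
      = Q - (Acl * M * Aclᵀ + Ft * Ftᵀ) := by
    rw [Matrix.mul_sub, Matrix.sub_mul]
    abel
  rwa [heq] at hsum
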